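/- Fix an integer ℓ ≥ 2 and work in the formal power series ring ℤ[[v, X_0, …, X_{ℓ−1}]] with its product topology; extend the indexing ℓ-periodically by X_a := X_{a mod ℓ} for a ∈ ℤ, and set z := X_0 X_1 ⋯ X_{ℓ−1}. For every a ∈ ℤ, the family over all Young diagrams μ of the monomials v^{col(μ)} ∏_{(i,j) ∈ μ} X_{a−j+1} has a sum, and this sum equals the convergent infinite product ∏_{k=1}^∞ (1 − v z^k)^{−1} ∏_{c=1}^{ℓ−1} (1 − v z^{k−1} X_a X_{a−1} ⋯ X_{a−c+1})^{−1}, where each factor is a unit (constant term 1) and the product over k is a tprod in the product topology. (This is Lemma 3.2 of the paper, the partition identity ∑_μ v^{col(μ)} ∏_{(i,j)∈μ} X_{a−j+1} = ∏_{k≥1} (1 − v z^k)^{−1} ∏_{c=1}^{ℓ−1} (1 − v z^k ∏_{b=c}^{ℓ−1} X_{a−b}^{−1})^{−1}, with the negative powers removed via z ∏_{b=c}^{ℓ−1} X_{a−b}^{−1} = ∏_{b=0}^{c−1} X_{a−b}.) -/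

import Mathlib

noncomputable section

/-- The product (coefficient-wise) topology on a multivariate power series ring, with the
coefficient ring given its topology (here the coefficients will be discrete). -/
instance mvPowerSeriesTopology (σ R : Type*) [TopologicalSpace R] :
    TopologicalSpace (MvPowerSeries σ R) :=
  inferInstanceAs (TopologicalSpace ((σ →₀ ℕ) → R))

/-- The number of (nonempty) columns of a Young diagram, i.e. the length of its first row. -/
def YoungDiagram.ncols (μ : YoungDiagram) : ℕ := μ.rowLen 0

namespace Stmt5Aux

open MvPowerSeries Finset

variable {ℓ : ℕ}

abbrev S (ℓ : ℕ) := MvPowerSeries (Option (ZMod ℓ)) ℤ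

def deg (d : Option (ZMod ℓ) →₀ ℕ) : ℕ := d.sum fun _ n => n

theorem deg_add (d₁ d₂ : Option (ZMod ℓ) →₀ ℕ) : deg (d₁ + d₂) = deg d₁ + deg d₂ :=
  Finsupp.sum_add_index' (fun _ => rfl) (fun _ _ _ => rfl)

def J (ℓ : ℕ) (n : ℕ) : Ideal (S ℓ) where
  carrier := {φ | ∀ d, deg d < n → MvPowerSeries.coeff (R := ℤ) d φ = 0}
  add_mem' := fun hφ hψ d hd => by rw [map_add, hφ d hd, hψ d hd, add_zero]
  zero_mem' := fun d _ => by simp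
  smul_mem' := by
    intro c φ hφ d hd
    rw [smul_eq_mul, MvPowerSeries.coeff_mul]
    refine Finset.sum_eq_zero fun p hp => ?_
    rw [Finset.HasAntidiagonal.mem_antidiagonal] at hp
    have h2 : deg p.2 ≤ deg d := by
      rw [← hp, deg_add]; omega
    rw [hφ p.2 (lt_of_le_of_lt h2 hd), mul_zero]

theorem mem_J {n : ℕ} {φ : S ℓ} :
    φ ∈ J ℓ n ↔ ∀ d, deg d < n → MvPowerSeries.coeff (R := ℤ) d φ = 0 := Iff.rfl

theorem J_mono {m n : ℕ} (h : m ≤ n) : J ℓ n ≤ J ℓ m :=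
  fun _ hφ d hd => hφ d (lt_of_lt_of_le hd h)

theorem mul_mem_J {m n : ℕ} {φ ψ : S ℓ} (hφ : φ ∈ J ℓ m) (hψ : ψ ∈ J ℓ n) :
    φ * ψ ∈ J ℓ (m + n) := by
  intro d hd
  rw [MvPowerSeries.coeff_mul]
  refine Finset.sum_eq_zero fun p hp => ?_
  rw [Finset.HasAntidiagonal.mem_antidiagonal] at hp
  have : deg p.1 + deg p.2 < m + n := by rw [← deg_add, hp]; exact hd
  rcases lt_or_ge (deg p.1) m with h1 | h1
  · rw [hφ p.1 h1, zero_mul]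
  · rw [hψ p.2 (by omega), mul_zero]

theorem X_mem_J (i : Option (ZMod ℓ)) : (MvPowerSeries.X i : S ℓ) ∈ J ℓ 1 := by
  intro d hd
  rw [MvPowerSeries.coeff_X]
  have : d ≠ Finsupp.single i 1 := by
    rintro rfl
    simp [deg, Finsupp.sum_single_index] at hd
  simp [this]

theorem coeff_eq_of_sub_mem {n : ℕ} {φ ψ : S ℓ} (h : φ - ψ ∈ J ℓ n)
    {d : Option (ZMod ℓ) →₀ ℕ} (hd : deg d < n) :
    MvPowerSeries.coeff (R := ℤ) d φ = MvPowerSeries.coeff (R := ℤ) d ψ := by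
  have := h d hd
  rw [map_sub, sub_eq_zero] at this
  exact this

theorem prod_sub_one_mem {ι : Type*} {n : ℕ} {F : Finset ι} {e : ι → S ℓ}
    (h : ∀ i ∈ F, e i - 1 ∈ J ℓ n) : (∏ i ∈ F, e i) - 1 ∈ J ℓ n := by
  classical
  induction F using Finset.induction_on with
  | empty => simp
  | @insert x F' hx ih =>
    rw [Finset.prod_insert hx]
    have h1 : e x - 1 ∈ J ℓ n := h x (Finset.mem_insert_self _ _)
    have h2 : (∏ i ∈ F', e i) - 1 ∈ J ℓ n := ih fun i hi => h i (Finset.mem_insert_of_mem hi)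
    have : e x * ∏ i ∈ F', e i - 1
        = (e x - 1) * ∏ i ∈ F', e i + ((∏ i ∈ F', e i) - 1) := by ring
    rw [this]
    exact Ideal.add_mem _ (Ideal.mul_mem_right _ _ h1) h2

theorem prod_congr_mod {ι : Type*} {n : ℕ} {F : Finset ι} {A B : ι → S ℓ}
    (h : ∀ i ∈ F, A i - B i ∈ J ℓ n) :
    (∏ i ∈ F, A i) - (∏ i ∈ F, B i) ∈ J ℓ n := by
  classical
  induction F using Finset.induction_on with
  | empty => simp
  | @insert x F' hx ih =>
    rw [Finset.prod_insert hx, Finset.prod_insert hx]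
    have h1 : A x - B x ∈ J ℓ n := h x (Finset.mem_insert_self _ _)
    have h2 : (∏ i ∈ F', A i) - (∏ i ∈ F', B i) ∈ J ℓ n :=
      ih fun i hi => h i (Finset.mem_insert_of_mem hi)
    have : A x * ∏ i ∈ F', A i - B x * ∏ i ∈ F', B i
        = (A x - B x) * ∏ i ∈ F', A i + B x * ((∏ i ∈ F', A i) - ∏ i ∈ F', B i) := by ring
    rw [this]
    exact Ideal.add_mem _ (Ideal.mul_mem_right _ _ h1) (Ideal.mul_mem_left _ _ h2)

section Defs

variable (ℓ : ℕ) (a : ℤ)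

def vS : S ℓ := MvPowerSeries.X none

def XS (b : ℤ) : S ℓ := MvPowerSeries.X (some (b : ZMod ℓ))

def W (n : ℕ) : S ℓ := ∏ j ∈ Finset.range n, XS ℓ (a - (j : ℤ))

def g (h : ℕ) : S ℓ := vS ℓ * W ℓ a (h + 1)

def q (h : ℕ) : S ℓ := Ring.inverse (1 - g ℓ a h)

end Defs

variable (a : ℤ)

theorem vS_mem : vS ℓ ∈ J ℓ 1 := X_mem_J none

theorem XS_mem (b : ℤ) : XS ℓ b ∈ J ℓ 1 := X_mem_J _

theorem W_mem (n : ℕ) : W ℓ a n ∈ J ℓ n := by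
  induction n with
  | zero => intro d hd; omega
  | succ n ih =>
    rw [W, Finset.prod_range_succ]
    exact mul_mem_J ih (XS_mem _)

theorem g_mem (h : ℕ) : g ℓ a h ∈ J ℓ (h + 2) := by
  have := mul_mem_J (vS_mem (ℓ := ℓ)) (W_mem a (h + 1))
  simpa [g, add_comm, add_left_comm] using this

theorem g_mem_one (h : ℕ) : g ℓ a h ∈ J ℓ 1 := J_mono (by omega) (g_mem a h)

theorem pow_mem_J {φ : S ℓ} (hφ : φ ∈ J ℓ 1) (n : ℕ) : φ ^ n ∈ J ℓ n := by
  induction n with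
  | zero => intro d hd; omega
  | succ n ih => rw [pow_succ]; exact mul_mem_J ih hφ

theorem isUnit_one_sub {φ : S ℓ} (hφ : φ ∈ J ℓ 1) : IsUnit (1 - φ) := by
  rw [MvPowerSeries.isUnit_iff_constantCoeff]
  have h0 : MvPowerSeries.constantCoeff φ = 0 := by
    have := hφ 0 (by simp [deg])
    rwa [MvPowerSeries.coeff_zero_eq_constantCoeff_apply] at this
  rw [map_sub, map_one, h0, sub_zero]
  exact isUnit_one

theorem one_sub_g_mul_q (h : ℕ) : (1 - g ℓ a h) * q ℓ a h = 1 :=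
  Ring.mul_inverse_cancel _ (isUnit_one_sub (g_mem_one a h))

theorem geo (h N : ℕ) :
    q ℓ a h = (∑ n ∈ Finset.range N, g ℓ a h ^ n) + g ℓ a h ^ N * q ℓ a h := by
  have hu := isUnit_one_sub (g_mem_one (ℓ := ℓ) a h)
  apply hu.mul_left_cancel
  rw [one_sub_g_mul_q]
  have hgs : (1 - g ℓ a h) * (∑ n ∈ Finset.range N, g ℓ a h ^ n)
      = 1 - g ℓ a h ^ N := by
    have := geom_sum_mul (g ℓ a h) N
    linear_combination -this
  rw [mul_add, hgs, ← mul_assoc, mul_comm (1 - g ℓ a h) (g ℓ a h ^ N), mul_assoc,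
    one_sub_g_mul_q, mul_one]
  ring

theorem q_sub_one_mem (h : ℕ) : q ℓ a h - 1 ∈ J ℓ (h + 2) := by
  have := geo (ℓ := ℓ) a h 1
  simp only [Finset.range_one, Finset.sum_singleton, pow_zero, pow_one] at this
  have heq : q ℓ a h - 1 = g ℓ a h * q ℓ a h := by linear_combination this
  rw [heq]
  exact Ideal.mul_mem_right _ _ (g_mem a h)

def prodq (M : ℕ) : S ℓ := ∏ h ∈ Finset.range M, q ℓ a h

theorem prodq_stable {M₁ M₂ : ℕ} (h12 : M₁ ≤ M₂) {d : Option (ZMod ℓ) →₀ ℕ}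
    (hd : deg d < M₁) :
    MvPowerSeries.coeff (R := ℤ) d (prodq a M₂) = MvPowerSeries.coeff (R := ℤ) d (prodq a M₁) := by
  have hsplit : prodq (ℓ := ℓ) a M₂ = prodq a M₁ * ∏ h ∈ Finset.Ico M₁ M₂, q ℓ a h := by
    rw [prodq, prodq, Finset.prod_range_mul_prod_Ico _ h12]
  have hmem : (∏ h ∈ Finset.Ico M₁ M₂, q ℓ a h) - 1 ∈ J ℓ (deg d + 1) := by
    apply prod_sub_one_mem
    intro i hi
    rw [Finset.mem_Ico] at hi
    exact J_mono (by omega) (q_sub_one_mem a i)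
  have : prodq (ℓ := ℓ) a M₂ - prodq a M₁
      = prodq a M₁ * ((∏ h ∈ Finset.Ico M₁ M₂, q ℓ a h) - 1) := by
    rw [hsplit]; ring
  exact coeff_eq_of_sub_mem (by rw [this]; exact Ideal.mul_mem_left _ _ hmem) (by omega)

def P : S ℓ := fun d => MvPowerSeries.coeff (R := ℤ) d (prodq a (deg d + 1))

theorem coeff_P {d : Option (ZMod ℓ) →₀ ℕ} {M : ℕ} (hd : deg d < M) :
    MvPowerSeries.coeff (R := ℤ) d (P (ℓ := ℓ) a) = MvPowerSeries.coeff (R := ℤ) d (prodq a M) := by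
  have h1 : MvPowerSeries.coeff (R := ℤ) d (P (ℓ := ℓ) a)
      = MvPowerSeries.coeff (R := ℤ) d (prodq a (deg d + 1)) := rfl
  rw [h1]
  exact (prodq_stable a (M₁ := deg d + 1) (M₂ := M) (by omega) (by omega)).symm

section Top

theorem hasSum_of_coeff {ι : Type*} {F : ι → S ℓ} {P : S ℓ}
    (h : ∀ d : Option (ZMod ℓ) →₀ ℕ, ∃ s : Finset ι,
      (∀ i ∉ s, MvPowerSeries.coeff (R := ℤ) d (F i) = 0) ∧
      ∑ i ∈ s, MvPowerSeries.coeff (R := ℤ) d (F i) = MvPowerSeries.coeff (R := ℤ) d P) :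
    HasSum F P := by
  rw [HasSum]
  apply tendsto_pi_nhds.2
  intro d
  obtain ⟨s₀, hvan, hsum⟩ := h d
  apply Filter.EventuallyEq.tendsto (x := P d)
  filter_upwards [Filter.eventually_ge_atTop s₀] with s hs
  have h1 : (∑ i ∈ s, F i) d = ∑ i ∈ s, MvPowerSeries.coeff (R := ℤ) d (F i) := by
    rw [← map_sum]; rfl
  rw [h1, ← Finset.sum_subset hs (fun i _ hi => hvan i hi), hsum]
  rfl

theorem hasProd_of_coeff {F : ℕ → S ℓ} {P : S ℓ}
    (h : ∀ d : Option (ZMod ℓ) →₀ ℕ, ∃ K : ℕ, ∀ s : Finset ℕ, Finset.range K ⊆ s →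
      MvPowerSeries.coeff (R := ℤ) d (∏ i ∈ s, F i) = MvPowerSeries.coeff (R := ℤ) d P) :
    HasProd F P := by
  rw [HasProd]
  apply tendsto_pi_nhds.2
  intro d
  obtain ⟨K, hK⟩ := h d
  apply Filter.EventuallyEq.tendsto (x := P d)
  filter_upwards [Filter.eventually_ge_atTop (Finset.range K)] with s hs
  exact hK s hs

end Top

def factorS (k : ℕ) : S ℓ := ∏ j ∈ Finset.range ℓ, q ℓ a (k * ℓ + j)

theorem factorS_sub_one_mem {n k : ℕ} (hℓ : 1 ≤ ℓ) (hk : n ≤ k) :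
    factorS a k - 1 ∈ J ℓ (n + 1) := by
  apply prod_sub_one_mem
  intro j _
  refine J_mono ?_ (q_sub_one_mem a (k * ℓ + j))
  have : k ≤ k * ℓ := Nat.le_mul_of_pos_right k (by omega)
  omega

theorem prod_range_factorS (K : ℕ) :
    ∏ k ∈ Finset.range K, factorS (ℓ := ℓ) a k = prodq a (K * ℓ) := by
  induction K with
  | zero => simp [prodq]
  | succ K ih =>
    rw [Finset.prod_range_succ, ih, prodq, prodq, Nat.succ_mul,
      Finset.prod_range_add]
    rfl

theorem hasProd_factorS (hℓ : 1 ≤ ℓ) : HasProd (factorS (ℓ := ℓ) a) (P a) := by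
  apply hasProd_of_coeff
  intro d
  refine ⟨deg d + 1, fun s hs => ?_⟩
  set K := deg d + 1 with hK
  have hsplit : ∏ i ∈ s, factorS (ℓ := ℓ) a i
      = (∏ i ∈ Finset.range K, factorS a i) * ∏ i ∈ s \ Finset.range K, factorS a i := by
    rw [← Finset.prod_sdiff hs, mul_comm]
  have hmem : (∏ i ∈ s \ Finset.range K, factorS (ℓ := ℓ) a i) - 1 ∈ J ℓ (deg d + 1) := by
    apply prod_sub_one_mem
    intro i hi
    rw [Finset.mem_sdiff, Finset.mem_range] at hi
    exact factorS_sub_one_mem a hℓ (by omega)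
  have heq : MvPowerSeries.coeff (R := ℤ) d (∏ i ∈ s, factorS (ℓ := ℓ) a i)
      = MvPowerSeries.coeff (R := ℤ) d (∏ i ∈ Finset.range K, factorS a i) := by
    apply coeff_eq_of_sub_mem (n := deg d + 1) _ (by omega)
    have : (∏ i ∈ s, factorS (ℓ := ℓ) a i) - ∏ i ∈ Finset.range K, factorS a i
        = (∏ i ∈ Finset.range K, factorS a i) *
          ((∏ i ∈ s \ Finset.range K, factorS a i) - 1) := by
      rw [hsplit]; ring
    rw [this]
    exact Ideal.mul_mem_left _ _ hmem
  rw [heq, prod_range_factorS]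
  exact (coeff_P a (lt_of_lt_of_le (by omega) (Nat.le_mul_of_pos_right K (by omega)))).symm

def zS (ℓ : ℕ) : S ℓ := ∏ b ∈ Finset.range ℓ, XS ℓ (b : ℤ)

theorem prod_XS_univ [NeZero ℓ] (a' : ℤ) :
    ∏ j ∈ Finset.range ℓ, XS ℓ (a' - (j : ℤ)) = ∏ x : ZMod ℓ, MvPowerSeries.X (some x) := by
  refine Finset.prod_nbij' (fun j => ((a' - (j : ℤ) : ℤ) : ZMod ℓ))
    (fun x => (((a' : ZMod ℓ) - x).val)) ?_ ?_ ?_ ?_ ?_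
  · intro j _; exact Finset.mem_univ _
  · intro x _; exact Finset.mem_range.2 (ZMod.val_lt _)
  · intro j hj
    rw [Finset.mem_range] at hj
    push_cast
    ring_nf
    rw [ZMod.val_natCast, Nat.mod_eq_of_lt hj]
  · intro x _
    push_cast
    rw [ZMod.natCast_val, ZMod.cast_id]
    ring
  · intro j _; rfl

theorem zS_eq_univ [NeZero ℓ] :
    zS ℓ = ∏ x : ZMod ℓ, MvPowerSeries.X (some x) := by
  refine Finset.prod_nbij' (fun b => ((b : ℤ) : ZMod ℓ)) (fun x => x.val) ?_ ?_ ?_ ?_ ?_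
  · intro j _; exact Finset.mem_univ _
  · intro x _; exact Finset.mem_range.2 (ZMod.val_lt _)
  · intro b hb
    rw [Finset.mem_range] at hb
    push_cast
    rw [ZMod.val_natCast, Nat.mod_eq_of_lt hb]
  · intro x _
    push_cast
    simp [ZMod.natCast_val, ZMod.cast_id]
  · intro j _; rfl

theorem W_add_ell [NeZero ℓ] (n : ℕ) : W ℓ a (n + ℓ) = W ℓ a n * zS ℓ := by
  rw [W, Finset.prod_range_add, ← W]
  congr 1
  rw [zS_eq_univ]
  have h1 : ∀ j : ℕ, a - ((n + j : ℕ) : ℤ) = (a - n) - (j : ℤ) := by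
    intro j; push_cast; ring
  calc ∏ j ∈ Finset.range ℓ, XS ℓ (a - ((n + j : ℕ) : ℤ))
      = ∏ j ∈ Finset.range ℓ, XS ℓ ((a - n) - (j : ℤ)) :=
        Finset.prod_congr rfl fun j _ => by rw [h1]
    _ = ∏ x : ZMod ℓ, MvPowerSeries.X (some x) := prod_XS_univ (a - n)

theorem W_block [NeZero ℓ] (k c : ℕ) : W ℓ a (k * ℓ + c) = zS ℓ ^ k * W ℓ a c := by
  induction k with
  | zero => simp
  | succ k ih =>
    have h1 : (k + 1) * ℓ + c = (k * ℓ + c) + ℓ := by ring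
    rw [h1, W_add_ell, ih, pow_succ]
    ring

theorem factorS_eq (hℓ : 2 ≤ ℓ) (k : ℕ) :
    factorS (ℓ := ℓ) a k =
      Ring.inverse (1 - vS ℓ * zS ℓ ^ (k + 1)) *
        ∏ c ∈ Finset.Icc 1 (ℓ - 1),
          Ring.inverse (1 - vS ℓ * zS ℓ ^ k * ∏ b ∈ Finset.range c, XS ℓ (a - (b : ℤ))) := by
  haveI : NeZero ℓ := ⟨by omega⟩
  have hℓ1 : ℓ = (ℓ - 1) + 1 := by omega
  have hlast : q ℓ a (k * ℓ + (ℓ - 1)) = Ring.inverse (1 - vS ℓ * zS ℓ ^ (k + 1)) := by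
    rw [q, g]
    congr 2
    have h2 : k * ℓ + (ℓ - 1) + 1 = (k + 1) * ℓ + 0 := by
      have : (k + 1) * ℓ = k * ℓ + ℓ := by ring
      omega
    rw [h2, W_block, W, Finset.range_zero, Finset.prod_empty, mul_one]
  have hIcc : Finset.Icc 1 (ℓ - 1) = Finset.Ico 1 ℓ := by
    ext x
    simp only [Finset.mem_Icc, Finset.mem_Ico]
    omega
  have hrest : ∏ j ∈ Finset.range (ℓ - 1), q ℓ a (k * ℓ + j)
      = ∏ c ∈ Finset.Icc 1 (ℓ - 1),
          Ring.inverse (1 - vS ℓ * zS ℓ ^ k * ∏ b ∈ Finset.range c, XS ℓ (a - (b : ℤ))) := by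
    rw [hIcc, Finset.prod_Ico_eq_prod_range]
    have h3 : ℓ - 1 = ℓ - 1 := rfl
    refine Finset.prod_congr rfl fun j hj => ?_
    rw [q, g]
    congr 2
    have h4 : k * ℓ + j + 1 = k * ℓ + (1 + j) := by omega
    rw [h4, W_block, ← mul_assoc]
    rfl
  calc factorS (ℓ := ℓ) a k = ∏ j ∈ Finset.range ((ℓ - 1) + 1), q ℓ a (k * ℓ + j) := by
        rw [factorS, ← hℓ1]
    _ = (∏ j ∈ Finset.range (ℓ - 1), q ℓ a (k * ℓ + j)) * q ℓ a (k * ℓ + (ℓ - 1)) :=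
        Finset.prod_range_succ _ _
    _ = _ := by rw [hlast, hrest, mul_comm]

def G (f : ℕ →₀ ℕ) : S ℓ := ∏ h ∈ f.support, g ℓ a h ^ f h

theorem G_mem_of_mem_support {f : ℕ →₀ ℕ} {h : ℕ} (hh : h ∈ f.support) (n : ℕ)
    (hn : n ≤ h + 2 ∨ n ≤ f h) : G a f ∈ J ℓ n := by
  classical
  rw [G, ← Finset.mul_prod_erase _ _ hh]
  apply Ideal.mul_mem_right
  rcases hn with hn | hn
  · have h1 : f h ≠ 0 := Finsupp.mem_support_iff.1 hh
    obtain ⟨m, hm⟩ : ∃ m, f h = m + 1 := ⟨f h - 1, by omega⟩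
    rw [hm, pow_succ]
    exact J_mono hn (Ideal.mul_mem_left _ _ (g_mem a h))
  · exact J_mono hn (pow_mem_J (g_mem_one a h) (f h))

theorem hasSum_G (hℓ : 1 ≤ ℓ) : HasSum (G (ℓ := ℓ) a) (P a) := by
  classical
  apply hasSum_of_coeff
  intro d
  set D := deg d with hD
  set M := D + 1 with hM
  set s₀ := ((Finset.range M).pi (fun _ => Finset.range M)).image
    (fun p => Finsupp.indicator (Finset.range M) p) with hs₀
  refine ⟨s₀, ?_, ?_⟩
  · intro f hf
    have hmem : f.support ⊆ Finset.range M → (∀ i, f i < M) → f ∈ s₀ := by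
      intro h1 h2
      refine Finset.mem_image.2 ⟨fun i _ => f i, Finset.mem_pi.2 fun i _ =>
        Finset.mem_range.2 (h2 i), ?_⟩
      ext i
      by_cases hi : i ∈ Finset.range M
      · rw [Finsupp.indicator_of_mem hi]
      · rw [Finsupp.indicator_of_notMem hi]
        exact (Finsupp.notMem_support_iff.1 fun H => hi (h1 H)).symm
    by_cases hsupp : f.support ⊆ Finset.range M
    · have : ¬ ∀ i, f i < M := fun h2 => hf (hmem hsupp h2)
      push_neg at this
      obtain ⟨i, hfi⟩ := this
      have hi' : i ∈ f.support := Finsupp.mem_support_iff.2 (by omega)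
      exact G_mem_of_mem_support a hi' M (Or.inr hfi) d (by omega)
    · obtain ⟨i, hi, hir⟩ := Finset.not_subset.1 hsupp
      rw [Finset.mem_range, not_lt] at hir
      exact G_mem_of_mem_support a hi M (Or.inl (by omega)) d (by omega)
  · -- main computation
    have hsum_map : ∑ f ∈ s₀, MvPowerSeries.coeff (R := ℤ) d (G (ℓ := ℓ) a f)
        = ∑ p ∈ (Finset.range M).pi (fun _ => Finset.range M),
            MvPowerSeries.coeff (R := ℤ) d (G (ℓ := ℓ) a (Finsupp.indicator (Finset.range M) p)) := by
      rw [hs₀]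
      exact Finset.sum_image fun x _ y _ h => Finsupp.indicator_injective _ h
    have hGind : ∀ p ∈ (Finset.range M).pi (fun _ => Finset.range M),
        G (ℓ := ℓ) a (Finsupp.indicator (Finset.range M) p)
          = ∏ x ∈ (Finset.range M).attach, g ℓ a x.1 ^ p x.1 x.2 := by
      intro p _
      rw [G]
      rw [Finset.prod_subset
        (fun x hx => Finsupp.support_indicator_subset _ _ hx)
        (fun x _ hx => by rw [Finsupp.notMem_support_iff.1 hx, pow_zero])]
      rw [← Finset.prod_attach]
      refine Finset.prod_congr rfl fun x _ => ?_
      rw [Finsupp.indicator_of_mem x.2]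
    have hprodsum : ∏ h ∈ Finset.range M, (∑ n ∈ Finset.range M, g ℓ a h ^ n)
        = ∑ p ∈ (Finset.range M).pi (fun _ => Finset.range M),
            ∏ x ∈ (Finset.range M).attach, g ℓ a x.1 ^ p x.1 x.2 :=
      Finset.prod_sum _ _ _
    have hstep1 : MvPowerSeries.coeff (R := ℤ) d (prodq (ℓ := ℓ) a M)
        = MvPowerSeries.coeff (R := ℤ) d (∏ h ∈ Finset.range M, (∑ n ∈ Finset.range M, g ℓ a h ^ n)) := by
      apply coeff_eq_of_sub_mem (n := M) _ (by omega)
      apply prod_congr_mod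
      intro h _
      have heq : q ℓ a h - ∑ n ∈ Finset.range M, g ℓ a h ^ n = g ℓ a h ^ M * q ℓ a h := by
        have := geo (ℓ := ℓ) a h M
        linear_combination this
      rw [heq]
      exact Ideal.mul_mem_right _ _ (pow_mem_J (g_mem_one a h) M)
    rw [hsum_map]
    rw [Finset.sum_congr rfl fun p hp => by rw [hGind p hp]]
    rw [← map_sum, ← hprodsum, ← hstep1]
    exact (coeff_P a (by omega)).symm

section Young

/-- rowLen differences. -/
def Efun (μ : YoungDiagram) (h : ℕ) : ℕ := μ.rowLen h - μ.rowLen (h + 1)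

theorem rowLen_zero_of_ge {μ : YoungDiagram} {r : ℕ} (hr : μ.colLen 0 ≤ r) :
    μ.rowLen r = 0 := by
  by_contra h
  have h1 : (r, 0) ∈ μ := YoungDiagram.mem_iff_lt_rowLen.2 (by omega)
  have h2 : r < μ.colLen 0 := YoungDiagram.mem_iff_lt_colLen.1 h1
  omega

def E (μ : YoungDiagram) : ℕ →₀ ℕ :=
  Finsupp.onFinset (Finset.range (μ.colLen 0)) (Efun μ) (by
    intro h hh
    rw [Finset.mem_range]
    by_contra hcon
    rw [not_lt] at hcon
    have h1 : μ.rowLen h = 0 := rowLen_zero_of_ge hcon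
    have h2 : μ.rowLen (h + 1) = 0 := rowLen_zero_of_ge (by omega)
    simp [Efun, h1, h2] at hh)

@[simp] theorem E_apply (μ : YoungDiagram) (h : ℕ) : E μ h = μ.rowLen h - μ.rowLen (h + 1) := rfl

theorem rowLen_eq_sum (μ : YoungDiagram) (r n : ℕ) :
    μ.rowLen r = (∑ i ∈ Finset.range n, Efun μ (r + i)) + μ.rowLen (r + n) := by
  induction n with
  | zero => simp
  | succ n ih =>
    rw [Finset.sum_range_succ]
    have h1 : μ.rowLen (r + (n + 1)) ≤ μ.rowLen (r + n) := μ.rowLen_anti _ _ (by omega)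
    have h2 : Efun μ (r + n) = μ.rowLen (r + n) - μ.rowLen (r + n + 1) := rfl
    have h3 : μ.rowLen (r + n + 1) ≤ μ.rowLen (r + n) := μ.rowLen_anti _ _ (by omega)
    have h0 : μ.rowLen (r + (n + 1)) = μ.rowLen (r + n + 1) := by rw [add_assoc]
    omega

theorem rowLen_eq_sum_E (μ : YoungDiagram) (r n : ℕ) (hn : μ.colLen 0 ≤ r + n) :
    μ.rowLen r = ∑ i ∈ Finset.range n, E μ (r + i) := by
  have := rowLen_eq_sum μ r n
  rw [rowLen_zero_of_ge hn, add_zero] at this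
  exact this

theorem E_injective : Function.Injective E := by
  intro μ ν h
  have hrow : ∀ r, μ.rowLen r = ν.rowLen r := by
    intro r
    set n := max (μ.colLen 0) (ν.colLen 0) with hn
    rw [rowLen_eq_sum_E μ r n (by omega), rowLen_eq_sum_E ν r n (by omega), h]
  ext c
  rw [YoungDiagram.mem_cells, YoungDiagram.mem_cells]
  obtain ⟨i, j⟩ := c
  rw [YoungDiagram.mem_iff_lt_rowLen, YoungDiagram.mem_iff_lt_rowLen, hrow]

/-- Number of columns of height > r, according to a multiplicity function f. -/
def Nf (f : ℕ →₀ ℕ) (r : ℕ) : ℕ := ∑ h ∈ f.support.filter (fun h => r ≤ h), f h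

theorem Nf_anti (f : ℕ →₀ ℕ) {r r' : ℕ} (h : r ≤ r') : Nf f r' ≤ Nf f r := by
  apply Finset.sum_le_sum_of_subset
  intro x hx
  rw [Finset.mem_filter] at hx ⊢
  exact ⟨hx.1, by omega⟩

theorem Nf_zero_of_ge (f : ℕ →₀ ℕ) {r : ℕ} (hr : f.support.sup id < r) : Nf f r = 0 := by
  rw [Nf]
  apply Finset.sum_eq_zero
  intro x hx
  rw [Finset.mem_filter] at hx
  have : id x ≤ f.support.sup id := Finset.le_sup hx.1
  simp only [id] at this
  omega

theorem Nf_succ (f : ℕ →₀ ℕ) (h : ℕ) : Nf f h = f h + Nf f (h + 1) := by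
  rw [Nf, Nf]
  have hsplit : f.support.filter (fun x => h ≤ x)
      = (f.support.filter (fun x => x = h)) ∪ (f.support.filter (fun x => h + 1 ≤ x)) := by
    ext x
    simp only [Finset.mem_union, Finset.mem_filter]
    constructor
    · rintro ⟨hx, hhx⟩
      rcases Nat.eq_or_lt_of_le hhx with h1 | h1
      · exact Or.inl ⟨hx, h1.symm⟩
      · exact Or.inr ⟨hx, h1⟩
    · rintro (⟨hx, rfl⟩ | ⟨hx, hhx⟩)
      · exact ⟨hx, le_refl _⟩
      · exact ⟨hx, by omega⟩
  rw [hsplit, Finset.sum_union]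
  · congr 1
    rw [Finset.filter_eq']
    by_cases hh : h ∈ f.support
    · rw [if_pos hh, Finset.sum_singleton]
    · rw [if_neg hh, Finset.sum_empty, Finsupp.notMem_support_iff.1 hh]
  · rw [Finset.disjoint_left]
    intro x hx hx'
    rw [Finset.mem_filter] at hx hx'
    omega

/-- The Young diagram associated to a multiplicity function. -/
def ofNf (f : ℕ →₀ ℕ) : YoungDiagram where
  cells := (Finset.range (f.support.sup id + 1) ×ˢ Finset.range (Nf f 0 + 1)).filter
    (fun c => c.2 < Nf f c.1)
  isLowerSet := by
    rintro ⟨i2, j2⟩ ⟨i1, j1⟩ ⟨hi : i1 ≤ i2, hj : j1 ≤ j2⟩ hc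
    simp only [Finset.coe_filter, Set.mem_setOf_eq, Finset.mem_product, Finset.mem_range] at hc ⊢
    obtain ⟨⟨hA, hB⟩, hlt⟩ := hc
    have h1 : Nf f i2 ≤ Nf f i1 := Nf_anti f hi
    exact ⟨⟨by omega, by omega⟩, by omega⟩

theorem mem_ofNf {f : ℕ →₀ ℕ} {c : ℕ × ℕ} : c ∈ ofNf f ↔ c.2 < Nf f c.1 := by
  constructor
  · intro h
    have := Finset.mem_filter.1 h
    exact this.2
  · intro h
    apply Finset.mem_filter.2
    refine ⟨Finset.mem_product.2 ⟨Finset.mem_range.2 ?_, Finset.mem_range.2 ?_⟩, h⟩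
    · by_contra hcon
      rw [not_lt] at hcon
      rw [Nf_zero_of_ge f (by omega)] at h
      omega
    · have := Nf_anti f (Nat.zero_le c.1)
      omega

theorem rowLen_ofNf (f : ℕ →₀ ℕ) (r : ℕ) : (ofNf f).rowLen r = Nf f r := by
  have hiff : ∀ j : ℕ, j < (ofNf f).rowLen r ↔ j < Nf f r := by
    intro j
    rw [← YoungDiagram.mem_iff_lt_rowLen, mem_ofNf]
  by_contra hne
  rcases Nat.lt_or_ge ((ofNf f).rowLen r) (Nf f r) with h | h
  · have := (hiff ((ofNf f).rowLen r)).2 h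
    omega
  · have hne' : Nf f r < (ofNf f).rowLen r := by omega
    have := (hiff (Nf f r)).1 hne'
    omega

theorem E_surjective : Function.Surjective E := by
  intro f
  refine ⟨ofNf f, ?_⟩
  ext h
  rw [E_apply, rowLen_ofNf, rowLen_ofNf, Nf_succ f h]
  omega

theorem cells_prod (μ : YoungDiagram) (F : ℕ → S ℓ) :
    ∏ cell ∈ μ.cells, F cell.1 = ∏ i ∈ Finset.range (μ.colLen 0), F i ^ μ.rowLen i := by
  classical
  have hcells : μ.cells = (Finset.range (μ.colLen 0)).biUnion μ.row := by
    ext c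
    rw [Finset.mem_biUnion]
    constructor
    · intro hc
      rw [YoungDiagram.mem_cells] at hc
      refine ⟨c.1, Finset.mem_range.2 ?_, YoungDiagram.mem_row_iff.2 ⟨hc, rfl⟩⟩
      apply YoungDiagram.mem_iff_lt_colLen.1
      exact μ.up_left_mem (le_refl _) (Nat.zero_le _) (by rwa [Prod.mk.eta])
    · rintro ⟨i, _, hc⟩
      rw [YoungDiagram.mem_cells]
      exact (YoungDiagram.mem_row_iff.1 hc).1
  rw [hcells, Finset.prod_biUnion]
  · refine Finset.prod_congr rfl fun i _ => ?_
    rw [YoungDiagram.row_eq_prod, Finset.prod_product]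
    simp
  · intro x _ y _ hxy
    rw [Function.onFun, Finset.disjoint_left]
    intro c hc hc'
    rw [YoungDiagram.mem_row_iff] at hc hc'
    exact hxy (hc.2 ▸ hc'.2.symm ▸ rfl)

theorem m_eq (μ : YoungDiagram) :
    vS ℓ ^ μ.rowLen 0 * ∏ cell ∈ μ.cells, XS ℓ (a - (cell.1 : ℤ)) = G a (E μ) := by
  classical
  set M := μ.colLen 0 with hM
  have hsupp : (E μ).support ⊆ Finset.range M := Finsupp.support_onFinset_subset
  rw [G, Finset.prod_subset hsupp
    (fun x _ hx => by rw [Finsupp.notMem_support_iff.1 hx, pow_zero])]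
  have hstep : ∏ h ∈ Finset.range M, g ℓ a h ^ E μ h
      = vS ℓ ^ (∑ h ∈ Finset.range M, E μ h) *
          ∏ h ∈ Finset.range M, W ℓ a (h + 1) ^ E μ h := by
    rw [← Finset.prod_pow_eq_pow_sum, ← Finset.prod_mul_distrib]
    exact Finset.prod_congr rfl fun h _ => by rw [g, mul_pow]
  rw [hstep]
  have hsum : ∑ h ∈ Finset.range M, E μ h = μ.rowLen 0 := by
    rw [rowLen_eq_sum_E μ 0 M (by omega)]
    exact Finset.sum_congr rfl fun h _ => by rw [zero_add]
  rw [hsum]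
  congr 1
  -- ∏ cells = ∏ W-powers
  rw [cells_prod μ (fun i => XS ℓ (a - (i : ℤ)))]
  have hW : ∀ h ∈ Finset.range M, W ℓ a (h + 1) ^ E μ h
      = ∏ j ∈ Finset.range M, (if j ≤ h then XS ℓ (a - (j : ℤ)) ^ E μ h else 1) := by
    intro h hh
    rw [Finset.mem_range] at hh
    have e1 : ∏ j ∈ Finset.range (h + 1), XS ℓ (a - (j : ℤ)) ^ E μ h
        = ∏ j ∈ Finset.range (h + 1), (if j ≤ h then XS ℓ (a - (j : ℤ)) ^ E μ h else 1) :=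
      Finset.prod_congr rfl fun j hj => by
        rw [Finset.mem_range] at hj; rw [if_pos (by omega)]
    have e2 : ∏ j ∈ Finset.range (h + 1), (if j ≤ h then XS ℓ (a - (j : ℤ)) ^ E μ h else 1)
        = ∏ j ∈ Finset.range M, (if j ≤ h then XS ℓ (a - (j : ℤ)) ^ E μ h else 1) := by
      apply Finset.prod_subset
      · intro j hj
        rw [Finset.mem_range] at hj ⊢
        omega
      · intro j _ hj
        rw [Finset.mem_range] at hj
        rw [if_neg (by omega)]
    rw [W, ← Finset.prod_pow, e1, e2]
  rw [Finset.prod_congr rfl hW, Finset.prod_comm]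
  refine Finset.prod_congr rfl fun j hj => ?_
  rw [Finset.mem_range] at hj
  have h1 : ∏ h ∈ Finset.range M, (if j ≤ h then XS ℓ (a - (j : ℤ)) ^ E μ h else 1)
      = ∏ h ∈ (Finset.range M).filter (fun h => j ≤ h), XS ℓ (a - (j : ℤ)) ^ E μ h :=
    (Finset.prod_filter _ _).symm
  rw [h1, Finset.prod_pow_eq_pow_sum]
  congr 1
  have h2 : (Finset.range M).filter (fun h => j ≤ h) = Finset.Ico j M := by
    ext x
    simp only [Finset.mem_filter, Finset.mem_range, Finset.mem_Ico]
    omega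
  rw [h2, Finset.sum_Ico_eq_sum_range]
  exact rowLen_eq_sum_E μ j (M - j) (by omega)

end Young

end Stmt5Aux

/-- Lemma 3.2: Fix `ℓ ≥ 2` and work in `ℤ[[v, X_0, …, X_{ℓ−1}]]`
(realized as `MvPowerSeries (Option (ZMod ℓ)) ℤ`, with `v` the variable at `none` and `X_c` the
variable at `some c`, indexed ℓ-periodically) with the product topology; set
`z := X_0 X_1 ⋯ X_{ℓ−1}`.  For every `a ∈ ℤ`, the family over all Young diagrams `μ` of
`v^{col(μ)} ∏_{(i,j) ∈ μ} X_{a−j+1}` (for a Mathlib cell, `j − 1 = cell.1`, so a box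
contributes `X_{a − cell.1}`) has a sum, and this sum equals
`∏'_{k} (1 − v z^{k+1})⁻¹ ∏_{c=1}^{ℓ−1} (1 − v z^{k} X_a X_{a−1} ⋯ X_{a−c+1})⁻¹`
(the factor indexed by `k : ℕ` is the paper's factor for `k+1`, with
`z^{k} X_a ⋯ X_{a−c+1} = z^{k+1} ∏_{b=c}^{ℓ−1} X_{a−b}^{−1}`), each factor being a unit. -/
theorem stmt5 (ℓ : ℕ) (hℓ : 2 ≤ ℓ) (a : ℤ) :
    let S := MvPowerSeries (Option (ZMod ℓ)) ℤ
    let v : S := MvPowerSeries.X none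
    let Xv : ℤ → S := fun b => MvPowerSeries.X (some (b : ZMod ℓ))
    let z : S := ∏ b ∈ Finset.range ℓ, Xv (b : ℤ)
    let factor : ℕ → S := fun k =>
      Ring.inverse (1 - v * z ^ (k + 1)) *
        ∏ c ∈ Finset.Icc 1 (ℓ - 1),
          Ring.inverse (1 - v * z ^ k * ∏ b ∈ Finset.range c, Xv (a - (b : ℤ)))
    (∀ k : ℕ, IsUnit (1 - v * z ^ (k + 1))) ∧
    (∀ k : ℕ, ∀ c ∈ Finset.Icc 1 (ℓ - 1),
      IsUnit (1 - v * z ^ k * ∏ b ∈ Finset.range c, Xv (a - (b : ℤ)))) ∧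
    Multipliable factor ∧
    HasSum
      (fun μ : YoungDiagram => v ^ μ.ncols * ∏ cell ∈ μ.cells, Xv (a - (cell.1 : ℤ)))
      (∏' k : ℕ, factor k) := by
  intro S v Xv z factor
  have hfe : factor = Stmt5Aux.factorS a := by
    funext k
    exact (Stmt5Aux.factorS_eq a hℓ k).symm
  have hprod : HasProd factor (Stmt5Aux.P a) := by
    rw [hfe]; exact Stmt5Aux.hasProd_factorS a (by omega)
  haveI : T2Space S := inferInstanceAs (T2Space ((Option (ZMod ℓ) →₀ ℕ) → ℤ))
  refine ⟨?_, ?_, hprod.multipliable, ?_⟩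
  · intro k
    apply Stmt5Aux.isUnit_one_sub
    exact Ideal.mul_mem_right _ _ (Stmt5Aux.vS_mem (ℓ := ℓ))
  · intro k c _
    apply Stmt5Aux.isUnit_one_sub
    have h1 : v * z ^ k * ∏ b ∈ Finset.range c, Xv (a - (b : ℤ))
        = v * (z ^ k * ∏ b ∈ Finset.range c, Xv (a - (b : ℤ))) := by ring
    rw [h1]
    exact Ideal.mul_mem_right _ _ (Stmt5Aux.vS_mem (ℓ := ℓ))
  · have h2 : (∏' k, factor k) = Stmt5Aux.P a := hprod.tprod_eq
    have hsum : HasSum (fun μ : YoungDiagram => Stmt5Aux.G a (Stmt5Aux.E μ))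
        (Stmt5Aux.P (ℓ := ℓ) a) := by
      have h := (Equiv.hasSum_iff (f := Stmt5Aux.G (ℓ := ℓ) a) (a := Stmt5Aux.P (ℓ := ℓ) a)
        (Equiv.ofBijective Stmt5Aux.E ⟨Stmt5Aux.E_injective, Stmt5Aux.E_surjective⟩)).2
        (Stmt5Aux.hasSum_G a (by omega))
      exact h
    have hfun : (fun μ : YoungDiagram => v ^ μ.ncols * ∏ cell ∈ μ.cells, Xv (a - (cell.1 : ℤ)))
        = fun μ : YoungDiagram => Stmt5Aux.G a (Stmt5Aux.E μ) := by
      funext μ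
      exact Stmt5Aux.m_eq a μ
    rw [hfun, h2]
    exact hsum
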